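/- Suppose η_n → 0, √n·η_n → e with 0 ≤ e < ∞, and √n·θ_n → ν ∈ ℝ. Then the distribution of √n(θ̂_S − θ_n) under P_{n,θ_n} converges weakly to {Φ(−ν+e) − Φ(−ν−e)}·δ_{−ν} + (measure with density x ↦ φ(x+e)·1(x > −ν) + φ(x−e)·1(x < −ν)). -/

import Mathlib

open MeasureTheory ProbabilityTheory Real Filter Topology Set

noncomputable def stdGauss : Measure ℝ := gaussianReal 0 1

/-- Standard normal cdf. -/
noncomputable def Phi (x : ℝ) : ℝ := (stdGauss (Set.Iic x)).toReal

/-- Standard normal density. -/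
noncomputable def phi (x : ℝ) : ℝ := gaussianPDFReal 0 1 x

/-- Hard-thresholding estimator. -/
noncomputable def hardThresh (η y : ℝ) : ℝ := if η < |y| then y else 0

/-- Soft-thresholding (LASSO) estimator. -/
noncomputable def softThresh (η y : ℝ) : ℝ := Real.sign y * max (|y| - η) 0

/-- SCAD estimator. -/
noncomputable def scadThresh (a η y : ℝ) : ℝ :=
  if |y| ≤ 2 * η then Real.sign y * max (|y| - η) 0
  else if |y| ≤ a * η then ((a - 1) * y - Real.sign y * a * η) / (a - 2)
  else y

noncomputable def st (η y : ℝ) : ℝ := max (y - η) 0 - max (-y - η) 0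

lemma softThresh_eq_st {η : ℝ} (hη : 0 ≤ η) (y : ℝ) : softThresh η y = st η y := by
  unfold softThresh st
  rcases lt_trichotomy y 0 with hy | hy | hy
  · rw [Real.sign_of_neg hy, abs_of_neg hy, max_eq_right (by linarith : y - η ≤ 0)]
    ring
  · subst hy
    simp
  · rw [Real.sign_of_pos hy, abs_of_pos hy, max_eq_right (by linarith : -y - η ≤ 0)]
    ring

lemma st_scale {c : ℝ} (hc : 0 ≤ c) (η y : ℝ) : c * st η y = st (c * η) (c * y) := by
  unfold st
  rw [mul_sub, mul_max_of_nonneg _ _ hc, mul_max_of_nonneg _ _ hc, mul_zero,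
    mul_sub, show c * (-y - η) = -(c*y) - c*η by ring]

lemma st_cont : Continuous (fun p : ℝ × ℝ => st p.1 p.2) := by
  unfold st; fun_prop

lemma st_cont_y (η : ℝ) : Continuous (st η) := by
  unfold st; fun_prop

lemma st_of_mid {η y : ℝ} (h1 : -η ≤ y) (h2 : y ≤ η) : st η y = 0 := by
  unfold st
  rw [max_eq_right (by linarith), max_eq_right (by linarith)]
  ring

lemma st_of_gt {η y : ℝ} (hη : 0 ≤ η) (h : η < y) : st η y = y - η := by
  unfold st
  rw [max_eq_left (by linarith), max_eq_right (by linarith)]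
  ring

lemma st_of_lt {η y : ℝ} (hη : 0 ≤ η) (h : y < -η) : st η y = y + η := by
  unfold st
  rw [max_eq_right (by linarith), max_eq_left (by linarith)]
  ring

instance : IsProbabilityMeasure stdGauss := by unfold stdGauss; infer_instance

lemma stdGauss_eq : stdGauss = volume.withDensity (fun x => ENNReal.ofReal (phi x)) := by
  unfold stdGauss phi
  rw [gaussianReal_of_var_ne_zero 0 one_ne_zero]; rfl

lemma phi_nonneg (x : ℝ) : 0 ≤ phi x := gaussianPDFReal_nonneg 0 1 x
lemma phi_meas : Measurable phi := measurable_gaussianPDFReal 0 1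
lemma phi_integrable : Integrable phi := integrable_gaussianPDFReal 0 1

lemma integral_withDensity_ofReal {d : ℝ → ℝ} (hd : Measurable d) (hd0 : ∀ x, 0 ≤ d x)
    (g : ℝ → ℝ) :
    ∫ x, g x ∂(volume.withDensity fun x => ENNReal.ofReal (d x)) = ∫ x, d x * g x := by
  have h1 : (fun x => ENNReal.ofReal (d x)) = fun x => ((d x).toNNReal : ENNReal) := rfl
  rw [h1, integral_withDensity_eq_integral_smul hd.real_toNNReal g]
  congr 1; ext x
  rw [NNReal.smul_def, Real.coe_toNNReal _ (hd0 x), smul_eq_mul]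

lemma Phi_eq_integral (x : ℝ) : Phi x = ∫ t in Iic x, phi t := by
  unfold Phi stdGauss
  rw [gaussianReal_apply_eq_integral 0 one_ne_zero,
    ENNReal.toReal_ofReal (integral_nonneg fun t => gaussianPDFReal_nonneg 0 1 t)]
  rfl

lemma integral_phi_Icc {a b : ℝ} (hab : a ≤ b) : ∫ t in Icc a b, phi t = Phi b - Phi a := by
  rw [Phi_eq_integral, Phi_eq_integral, integral_Icc_eq_integral_Ioc,
    intervalIntegral.integral_Iic_sub_Iic phi_integrable.integrableOn phi_integrable.integrableOn,
    intervalIntegral.integral_of_le hab]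

lemma integrable_phi_shift (c : ℝ) : Integrable (fun x => phi (x + c)) := by
  have : (fun x => phi (x + c)) = gaussianPDFReal (0 - c) 1 :=
    funext fun x => gaussianPDFReal_add x c
  rw [this]; exact integrable_gaussianPDFReal _ _

lemma integrable_phi_shift_mul (c : ℝ) (f : BoundedContinuousFunction ℝ ℝ) :
    Integrable (fun x => phi (x + c) * f x) :=
  (((integrable_phi_shift c).bdd_mul f.continuous.aestronglyMeasurable
    (ae_of_all _ fun x => f.norm_coe_le_norm x))).congr (ae_of_all _ fun x => mul_comm _ _)

lemma limit_integral (e ν : ℝ) (he : 0 ≤ e) (f : BoundedContinuousFunction ℝ ℝ) :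
    (∫ x, f x ∂(ENNReal.ofReal (Phi (-ν + e) - Phi (-ν - e)) • Measure.dirac (-ν)
      + volume.withDensity (fun x => ENNReal.ofReal
          ((if -ν < x then phi (x + e) else 0) + (if x < -ν then phi (x - e) else 0)))))
    = ∫ z, f (st e (ν + z) - ν) ∂stdGauss := by
  have hfb : ∃ C, ∀ x : ℝ, ‖f x‖ ≤ C := ⟨‖f‖, fun x => f.norm_coe_le_norm x⟩
  set dens : ℝ → ℝ := fun x =>
    (if -ν < x then phi (x + e) else 0) + (if x < -ν then phi (x - e) else 0) with hdens
  set I1 : ℝ → ℝ := (Ioi (-ν)).indicator (fun x => phi (x + e) * f x) with hI1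
  set I2 : ℝ → ℝ := (Iio (-ν)).indicator (fun x => phi (x - e) * f x) with hI2
  have hmono : Phi (-ν - e) ≤ Phi (-ν + e) := by
    unfold Phi
    exact ENNReal.toReal_mono (measure_ne_top _ _)
      (measure_mono (Iic_subset_Iic.2 (by linarith)))
  have hdens_meas : Measurable dens := by
    apply Measurable.add
    · have : (fun x => if -ν < x then phi (x + e) else 0)
          = (Ioi (-ν)).indicator (fun x => phi (x + e)) := by
        ext x; simp [indicator_apply, mem_Ioi]
      rw [this]
      exact (phi_meas.comp (measurable_id.add_const e)).indicator measurableSet_Ioi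
    · have : (fun x => if x < -ν then phi (x - e) else 0)
          = (Iio (-ν)).indicator (fun x => phi (x - e)) := by
        ext x; simp [indicator_apply, mem_Iio]
      rw [this]
      exact (phi_meas.comp (measurable_id.sub_const e)).indicator measurableSet_Iio
  have hd0 : ∀ x, 0 ≤ dens x := by
    intro x
    apply add_nonneg <;> (split_ifs <;> simp [phi_nonneg])
  have hint1 : Integrable (fun x => phi (x + e) * f x) := integrable_phi_shift_mul e f
  have hint2 : Integrable (fun x => phi (x - e) * f x) := by
    simpa [sub_eq_add_neg] using integrable_phi_shift_mul (-e) f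
  have hI1int : Integrable I1 := hint1.indicator measurableSet_Ioi
  have hI2int : Integrable I2 := hint2.indicator measurableSet_Iio
  have hpoint : ∀ x, dens x * f x = I1 x + I2 x := by
    intro x
    simp only [hdens, hI1, hI2, indicator_apply, mem_Ioi, mem_Iio]
    by_cases h1 : -ν < x
    · rw [if_pos h1, if_pos h1, if_neg (by linarith), if_neg (by linarith)]; ring
    · rw [if_neg h1, if_neg h1]
      by_cases h2 : x < -ν
      · rw [if_pos h2, if_pos h2]; ring
      · rw [if_neg h2, if_neg h2]; ring
  have hdint : Integrable (fun x => dens x * f x) :=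
    (hI1int.add hI2int).congr (ae_of_all _ fun x => (hpoint x).symm)
  -- integrability wrt each summand measure
  have hf1 : Integrable f ((ENNReal.ofReal (Phi (-ν + e) - Phi (-ν - e))) • Measure.dirac (-ν)) :=
    (f.integrable _).smul_measure ENNReal.ofReal_ne_top
  have hf2 : Integrable f (volume.withDensity fun x => ENNReal.ofReal (dens x)) := by
    have h1 : (fun x => ENNReal.ofReal (dens x)) = fun x => ((dens x).toNNReal : ENNReal) := rfl
    rw [h1, integrable_withDensity_iff_integrable_smul hdens_meas.real_toNNReal]
    apply hdint.congr (ae_of_all _ fun x => ?_)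
    rw [NNReal.smul_def, Real.coe_toNNReal _ (hd0 x), smul_eq_mul]
  rw [integral_add_measure hf1 hf2, integral_smul_measure, integral_dirac,
    ENNReal.toReal_ofReal (by linarith), integral_withDensity_ofReal hdens_meas hd0,
    integral_congr_ae (ae_of_all _ hpoint), integral_add hI1int hI2int, hI1, hI2,
    integral_indicator measurableSet_Ioi, integral_indicator measurableSet_Iio]
  -- now the Gaussian side
  have hGcont : Continuous (fun z => st e (ν + z) - ν) :=
    ((st_cont_y e).comp (continuous_const.add continuous_id)).sub continuous_const
  rw [stdGauss_eq, integral_withDensity_ofReal phi_meas phi_nonneg]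
  set h : ℝ → ℝ := fun z => phi z * f (st e (ν + z) - ν) with hh
  have hh_int : Integrable h :=
    (phi_integrable.bdd_mul (f.continuous.comp hGcont).aestronglyMeasurable
      (ae_of_all _ fun x => f.norm_coe_le_norm _)).congr (ae_of_all _ fun x => mul_comm _ _)
  have hpart : ∀ z, h z = (Iio (-e - ν)).indicator h z + (Icc (-e - ν) (e - ν)).indicator h z
      + (Ioi (e - ν)).indicator h z := by
    intro z
    simp only [indicator_apply, mem_Iio, mem_Icc, mem_Ioi]
    by_cases h1 : z < -e - ν
    · rw [if_pos h1, if_neg (by push_neg; intro h'; linarith), if_neg (by push_neg; linarith)]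
      ring
    · rw [if_neg h1]
      by_cases h2 : z ≤ e - ν
      · rw [if_pos ⟨by linarith, h2⟩, if_neg (by push_neg; linarith)]; ring
      · rw [if_neg (by push_neg; intro h'; linarith), if_pos (by push_neg at h2; linarith)]; ring
  have hadd1 : Integrable (fun a : ℝ => (Iio (-e - ν)).indicator h a
      + (Icc (-e - ν) (e - ν)).indicator h a) :=
    (hh_int.indicator measurableSet_Iio).add (hh_int.indicator measurableSet_Icc)
  rw [integral_congr_ae (ae_of_all _ hpart),
    integral_add hadd1 (hh_int.indicator measurableSet_Ioi),
    integral_add (hh_int.indicator measurableSet_Iio) (hh_int.indicator measurableSet_Icc),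
    integral_indicator measurableSet_Iio, integral_indicator measurableSet_Icc,
    integral_indicator measurableSet_Ioi]
  -- middle piece
  have hmid : ∫ z in Icc (-e - ν) (e - ν), h z = (Phi (-ν + e) - Phi (-ν - e)) * f (-ν) := by
    have : ∀ z ∈ Icc (-e - ν) (e - ν), h z = phi z * f (-ν) := by
      intro z hz
      simp only [hh]
      rw [st_of_mid (by linarith [hz.1]) (by linarith [hz.2])]
      norm_num
    rw [setIntegral_congr_fun measurableSet_Icc this, integral_mul_const,
      integral_phi_Icc (by linarith)]
    congr 2 <;> ring
  -- right piece
  have hright : ∫ z in Ioi (e - ν), h z = ∫ x in Ioi (-ν), phi (x + e) * f x := by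
    have h1 : ∀ z ∈ Ioi (e - ν), h z = phi z * f (z - e) := by
      intro z hz
      simp only [hh]
      rw [st_of_gt he (by simp only [mem_Ioi] at hz; linarith)]
      ring_nf
    rw [setIntegral_congr_fun measurableSet_Ioi h1,
      ← integral_indicator (measurableSet_Ioi (a := e - ν)),
      ← integral_add_right_eq_self
        (fun z => (Ioi (e - ν)).indicator (fun z => phi z * f (z - e)) z) e,
      ← integral_indicator (measurableSet_Ioi (a := -ν))]
    congr 1; ext x
    simp only [indicator_apply, mem_Ioi]
    by_cases hx : -ν < x
    · rw [if_pos (by linarith), if_pos hx, add_sub_cancel_right]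
    · rw [if_neg (by intro h'; exact hx (by linarith)), if_neg hx]
  -- left piece
  have hleft : ∫ z in Iio (-e - ν), h z = ∫ x in Iio (-ν), phi (x - e) * f x := by
    have h1 : ∀ z ∈ Iio (-e - ν), h z = phi z * f (z + e) := by
      intro z hz
      simp only [hh]
      rw [st_of_lt he (by simp only [mem_Iio] at hz; linarith)]
      ring_nf
    rw [setIntegral_congr_fun measurableSet_Iio h1,
      ← integral_indicator (measurableSet_Iio (a := -e - ν)),
      ← integral_add_right_eq_self
        (fun z => (Iio (-e - ν)).indicator (fun z => phi z * f (z + e)) z) (-e),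
      ← integral_indicator (measurableSet_Iio (a := -ν))]
    congr 1; ext x
    simp only [indicator_apply, mem_Iio]
    by_cases hx : x < -ν
    · rw [if_pos (by linarith), if_pos hx]
      norm_num [sub_eq_add_neg]
    · rw [if_neg (by intro h'; exact hx (by linarith)), if_neg hx]
  rw [hmid, hright, hleft]
  simp only [smul_eq_mul]
  ring


theorem stmt_13 (η θ : ℕ → ℝ) (hηpos : ∀ n, 0 < η n) (e ν : ℝ) (he : 0 ≤ e)
    (hη0 : Tendsto η atTop (𝓝 0))
    (hηe : Tendsto (fun n : ℕ => Real.sqrt n * η n) atTop (𝓝 e))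
    (hθν : Tendsto (fun n : ℕ => Real.sqrt n * θ n) atTop (𝓝 ν)) :
    ∀ f : BoundedContinuousFunction ℝ ℝ,
      Tendsto (fun n : ℕ => ∫ x, f x ∂(Measure.map
            (fun z => Real.sqrt n * (softThresh (η n) (θ n + z / Real.sqrt n) - θ n)) stdGauss))
        atTop
        (𝓝 (∫ x, f x ∂(ENNReal.ofReal (Phi (-ν + e) - Phi (-ν - e)) • Measure.dirac (-ν)
          + volume.withDensity (fun x => ENNReal.ofReal
              ((if -ν < x then phi (x + e) else 0) + (if x < -ν then phi (x - e) else 0)))))) := by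
  intro f
  rw [limit_integral e ν he f]
  have hseq : ∀ᶠ n : ℕ in atTop, (∫ x, f x ∂(Measure.map
        (fun z => Real.sqrt n * (softThresh (η n) (θ n + z / Real.sqrt n) - θ n)) stdGauss))
      = ∫ z, f (st (Real.sqrt n * η n) (Real.sqrt n * θ n + z) - Real.sqrt n * θ n) ∂stdGauss := by
    filter_upwards [eventually_ge_atTop 1] with n hn
    have hnpos : (0:ℝ) < n := by exact_mod_cast hn
    have hs : (0:ℝ) < Real.sqrt n := Real.sqrt_pos.2 hnpos
    have hfun : (fun z => Real.sqrt n * (softThresh (η n) (θ n + z / Real.sqrt n) - θ n))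
        = fun z => st (Real.sqrt n * η n) (Real.sqrt n * θ n + z) - Real.sqrt n * θ n := by
      funext z
      rw [softThresh_eq_st (hηpos n).le, mul_sub, st_scale hs.le]
      have : Real.sqrt n * (θ n + z / Real.sqrt n) = Real.sqrt n * θ n + z := by
        field_simp
      rw [this]
    have hc : Continuous (fun z : ℝ =>
        st (Real.sqrt n * η n) (Real.sqrt n * θ n + z) - Real.sqrt n * θ n) :=
      ((st_cont_y _).comp (continuous_const.add continuous_id)).sub continuous_const
    rw [hfun, integral_map hc.measurable.aemeasurable f.continuous.aestronglyMeasurable]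
  have hmain : Tendsto (fun n : ℕ =>
      ∫ z, f (st (Real.sqrt n * η n) (Real.sqrt n * θ n + z) - Real.sqrt n * θ n) ∂stdGauss)
      atTop (𝓝 (∫ z, f (st e (ν + z) - ν) ∂stdGauss)) := by
    apply tendsto_integral_of_dominated_convergence (fun _ => ‖f‖)
    · intro n
      exact (f.continuous.comp (((st_cont_y _).comp
        (continuous_const.add continuous_id)).sub continuous_const)).aestronglyMeasurable
    · exact integrable_const _
    · intro n
      exact ae_of_all _ fun z => f.norm_coe_le_norm _
    · apply ae_of_all
      intro z
      have h1 : Tendsto (fun n : ℕ => (Real.sqrt n * η n, Real.sqrt n * θ n + z)) atTop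
          (𝓝 (e, ν + z)) := hηe.prodMk_nhds (hθν.add_const z)
      have h2 : Tendsto (fun n : ℕ => st (Real.sqrt n * η n) (Real.sqrt n * θ n + z)) atTop
          (𝓝 (st e (ν + z))) := (st_cont.tendsto (e, ν + z)).comp h1
      exact (f.continuous.tendsto _).comp (h2.sub hθν)
  exact Tendsto.congr' (EventuallyEq.symm hseq) hmain
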